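/- Let K be a field and G a polycyclic-by-finite group. Then G is of K-linear Markov type: for every finite-dimensional K-vector space A, every linear subshift of A^G is of finite type. -/

import Mathlib

def shiftSigma (G : Type*) [Group G] {A : Type*} (D : Set G) (P : Set (D → A)) :
    Set (G → A) :=
  {x | ∀ g : G, (fun d : D => x (g * (d : G))) ∈ P}

def prodiscreteTop (G A : Type*) : TopologicalSpace (G → A) :=
  @Pi.topologicalSpace G (fun _ => A) (fun _ => ⊥)

def IsLinearSubshift (K : Type*) {G A : Type*} [Field K] [Group G] [AddCommGroup A]
    [Module K A] (S : Set (G → A)) : Prop :=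
  (∃ M : Submodule K (G → A), (M : Set (G → A)) = S) ∧
    (∀ g : G, ∀ x ∈ S, (fun h => x (g⁻¹ * h)) ∈ S) ∧
    @IsClosed _ (prodiscreteTop G A) S

def IsSFT {G A : Type*} [Group G] (S : Set (G → A)) : Prop :=
  ∃ (D : Finset G) (P : Set (↥(D : Set G) → A)), S = shiftSigma G (D : Set G) P

def IsLCA (K : Type*) {G A : Type*} [Field K] [Group G] [AddCommGroup A] [Module K A]
    (τ : (G → A) → (G → A)) : Prop :=
  IsLinearMap K τ ∧ ∃ (M : Finset G) (μ : (↥(M : Set G) → A) → A), IsLinearMap K μ ∧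
    ∀ (x : G → A) (g : G), τ x g = μ (fun m : (M : Set G) => x (g * (m : G)))

def IsPolycyclic (G : Type*) [Group G] : Prop :=
  ∃ (n : ℕ) (s : Fin (n + 1) → Subgroup G), s 0 = ⊥ ∧ s (Fin.last n) = ⊤ ∧
    ∀ i : Fin n, (s i.castSucc ≤ s i.succ) ∧
      ∃ hn : ((s i.castSucc).subgroupOf (s i.succ)).Normal,
        letI := hn
        IsCyclic (↥(s i.succ) ⧸ (s i.castSucc).subgroupOf (s i.succ))

def IsPolycyclicByFinite (G : Type*) [Group G] : Prop :=
  ∃ H : Subgroup G, IsPolycyclic ↥H ∧ H.FiniteIndex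

open MonoidAlgebra Finsupp

section Helpers

variable {K : Type} [Field K]

/-- convolution applied, summing over the left factor -/
theorem mulApplyLeft {G : Type} [Group G] (p q : MonoidAlgebra K G) (y : G) :
    (p * q).coeff y = p.coeff.sum fun v c => c * q.coeff (v⁻¹ * y) := by
  exact MonoidAlgebra.coeff_mul_apply_left p q y

/-- If `R` is generated as a left module over `Λ` (via `ι`) by a finite set, and `Λ` is
left Noetherian, then `R` is left Noetherian. -/
theorem noeth_of_finite_over {Λ R : Type} [Ring Λ] [Ring R] (ι : Λ →+* R)
    (hΛ : IsNoetherianRing Λ) (s : Finset R)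
    (hs : ∀ x : R, x ∈ AddSubmonoid.closure {y | ∃ a : Λ, ∃ t ∈ s, y = ι a * t}) :
    IsNoetherianRing R := by
  letI : Module Λ R := Module.compHom R ι
  have hsmul : ∀ (a : Λ) (x : R), a • x = ι a * x := fun _ _ => rfl
  haveI : IsScalarTower Λ R R := ⟨fun a x y => by
    show (ι a * x) * y = ι a * (x * y)
    rw [mul_assoc]⟩
  haveI : IsNoetherianRing Λ := hΛ
  haveI : Module.Finite Λ R := by
    refine ⟨⟨s, ?_⟩⟩
    rw [eq_top_iff]
    intro x _
    refine AddSubmonoid.closure_le.mpr ?_ (hs x)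
    rintro y ⟨a, t, ht, rfl⟩
    rw [← hsmul]
    exact Submodule.smul_mem _ a (Submodule.subset_span ht)
  haveI : IsNoetherian Λ R := inferInstance
  rw [isNoetherianRing_iff_ideal_fg]
  intro I
  let I' : Submodule Λ R :=
    { carrier := (I : Set R)
      add_mem' := fun ha hb => I.add_mem ha hb
      zero_mem' := I.zero_mem
      smul_mem' := fun a x hx => I.smul_mem (ι a) hx }
  obtain ⟨s', hs'⟩ := IsNoetherian.noetherian I'
  refine ⟨s', le_antisymm ?_ ?_⟩
  · rw [← Ideal.submodule_span_eq, Submodule.span_le]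
    intro y hy
    have : y ∈ I' := hs' ▸ Submodule.subset_span hy
    exact this
  · intro x hx
    have hx' : x ∈ Submodule.span Λ (s' : Set R) := by rw [hs']; exact hx
    have hle : Submodule.span Λ (s' : Set R) ≤ (Ideal.span (s' : Set R)).restrictScalars Λ :=
      Submodule.span_le.mpr fun y hy => Ideal.subset_span hy
    exact hle hx'

theorem noeth_finite_group (G : Type) [Group G] [Finite G] :
    IsNoetherianRing (MonoidAlgebra K G) := by
  haveI := Fintype.ofFinite G
  haveI : Module.Finite K (G → K) := Module.Finite.pi
  haveI : Module.Finite K (MonoidAlgebra K G) :=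
    Module.Finite.equiv (R := K) (M := G → K) (N := MonoidAlgebra K G)
      ((Finsupp.linearEquivFunOnFinite K K G).symm.trans (MonoidAlgebra.coeffLinearEquiv K).symm)
  haveI : IsNoetherian K (MonoidAlgebra K G) := inferInstance
  rw [isNoetherianRing_iff_ideal_fg]
  intro I
  obtain ⟨s, hs⟩ := IsNoetherian.noetherian (I.restrictScalars K)
  refine ⟨s, le_antisymm ?_ ?_⟩
  · rw [← Ideal.submodule_span_eq, Submodule.span_le]
    intro y hy
    have : y ∈ I.restrictScalars K := hs ▸ Submodule.subset_span hy
    exact this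
  · intro x hx
    have hx' : x ∈ Submodule.span K (s : Set (MonoidAlgebra K G)) := by rw [hs]; exact hx
    have hle : Submodule.span K (s : Set (MonoidAlgebra K G)) ≤
        (Ideal.span (s : Set (MonoidAlgebra K G))).restrictScalars K :=
      Submodule.span_le.mpr fun y hy => Ideal.subset_span hy
    exact hle hx'

theorem noeth_congr {G H : Type} [Group G] [Group H] (e : G ≃* H)
    (h : IsNoetherianRing (MonoidAlgebra K G)) : IsNoetherianRing (MonoidAlgebra K H) := by
  haveI := h
  exact isNoetherianRing_of_ringEquiv _ (MonoidAlgebra.domCongr K K e).toRingEquiv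

theorem noeth_of_finiteIndex {G : Type} [Group G] (H : Subgroup G) (hfi : H.FiniteIndex)
    (hH : IsNoetherianRing (MonoidAlgebra K ↥H)) : IsNoetherianRing (MonoidAlgebra K G) := by
  classical
  haveI := hfi
  haveI : Finite (G ⧸ H) := inferInstance
  haveI := Fintype.ofFinite (G ⧸ H)
  apply noeth_of_finite_over (MonoidAlgebra.mapDomainRingHom K H.subtype) hH
    (Finset.univ.image fun q : G ⧸ H =>
      (MonoidAlgebra.single (Quotient.out q)⁻¹ 1 : MonoidAlgebra K G))
  intro x
  have hx : x = ∑ g ∈ x.coeff.support, MonoidAlgebra.single g (x.coeff g) := by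
    conv_lhs => rw [← MonoidAlgebra.sum_coeff_single x]
    rfl
  rw [hx]
  refine AddSubmonoid.sum_mem _ fun g _ => AddSubmonoid.subset_closure ?_
  set q : G ⧸ H := QuotientGroup.mk g⁻¹ with hq
  have hout : (QuotientGroup.mk (Quotient.out q) : G ⧸ H) = QuotientGroup.mk g⁻¹ := by
    rw [hq]; exact Quotient.out_eq _
  have hmem : (Quotient.out q)⁻¹ * g⁻¹ ∈ H := (QuotientGroup.eq).mp hout
  refine ⟨MonoidAlgebra.single ⟨((Quotient.out q)⁻¹ * g⁻¹)⁻¹, H.inv_mem hmem⟩ (x.coeff g),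
    MonoidAlgebra.single (Quotient.out q)⁻¹ 1, Finset.mem_image_of_mem _ (Finset.mem_univ q), ?_⟩
  have : (MonoidAlgebra.mapDomainRingHom K H.subtype)
      (MonoidAlgebra.single ⟨((Quotient.out q)⁻¹ * g⁻¹)⁻¹, H.inv_mem hmem⟩ (x.coeff g)) =
      MonoidAlgebra.single ((((Quotient.out q))⁻¹ * g⁻¹)⁻¹ : G) (x.coeff g) := by
    simp [MonoidAlgebra.mapDomainRingHom, Finsupp.mapDomain_single]
  rw [this, MonoidAlgebra.single_mul_single, mul_one]
  congr 1
  group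

end Helpers

section Laurent

variable {K : Type} [Field K] {G : Type} [Group G]

/-- degree function induced by a homomorphism to `Multiplicative ℤ` -/
def laurentDeg (φ : G →* Multiplicative ℤ) (g : G) : ℤ := Multiplicative.toAdd (φ g)

theorem laurentDeg_mul (φ : G →* Multiplicative ℤ) (g h : G) :
    laurentDeg φ (g * h) = laurentDeg φ g + laurentDeg φ h := by
  simp [laurentDeg]

theorem laurentDeg_inv (φ : G →* Multiplicative ℤ) (g : G) :
    laurentDeg φ g⁻¹ = -laurentDeg φ g := by simp [laurentDeg]

theorem laurentDeg_ker (φ : G →* Multiplicative ℤ) (g : G) :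
    g ∈ φ.ker ↔ laurentDeg φ g = 0 := by
  rw [MonoidHom.mem_ker]
  constructor
  · intro h; simp [laurentDeg, h]
  · intro h
    have : Multiplicative.ofAdd (Multiplicative.toAdd (φ g)) = Multiplicative.ofAdd 0 :=
      congrArg _ h
    simpa using this

theorem laurentDeg_zpow (φ : G →* Multiplicative ℤ) {t : G} (ht : φ t = Multiplicative.ofAdd 1)
    (k : ℤ) : laurentDeg φ (t ^ k) = k := by
  simp [laurentDeg, map_zpow, ht]

/-- degree-bound predicate -/
def laurentBd (φ : G →* Multiplicative ℤ) (lo hi : ℤ) (r : MonoidAlgebra K G) : Prop :=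
  ∀ g : G, r.coeff g ≠ 0 → lo ≤ laurentDeg φ g ∧ laurentDeg φ g ≤ hi

theorem laurentInj (φ : G →* Multiplicative ℤ) (t : G) (n : ℤ) :
    Function.Injective (fun u : ↥φ.ker => t ^ n * (u : G)) := fun u v h =>
  Subtype.ext (mul_left_cancel h)

/-- extraction of the `n`-th coefficient block -/
noncomputable def laurentRho (φ : G →* Multiplicative ℤ) (t : G) (n : ℤ)
    (r : MonoidAlgebra K G) : MonoidAlgebra K ↥φ.ker :=
  MonoidAlgebra.comapDomain (fun u : ↥φ.ker => t ^ n * (u : G)) (laurentInj φ t n) r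

theorem laurentRho_apply (φ : G →* Multiplicative ℤ) (t : G) (n : ℤ)
    (r : MonoidAlgebra K G) (u : ↥φ.ker) :
    (laurentRho φ t n r).coeff u = r.coeff (t ^ n * (u : G)) := rfl

theorem laurentRho_add (φ : G →* Multiplicative ℤ) (t : G) (n : ℤ)
    (r s : MonoidAlgebra K G) :
    laurentRho φ t n (r + s) = laurentRho φ t n r + laurentRho φ t n s := by
  apply MonoidAlgebra.ext; apply Finsupp.ext; intro u
  rfl

theorem laurentRho_sub (φ : G →* Multiplicative ℤ) (t : G) (n : ℤ)
    (r s : MonoidAlgebra K G) :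
    laurentRho φ t n (r - s) = laurentRho φ t n r - laurentRho φ t n s := by
  apply MonoidAlgebra.ext; apply Finsupp.ext; intro u
  rfl

theorem laurentRho_zero (φ : G →* Multiplicative ℤ) (t : G) (n : ℤ) :
    laurentRho φ t n (0 : MonoidAlgebra K G) = 0 := by
  apply MonoidAlgebra.ext; apply Finsupp.ext; intro u; rfl

theorem laurentRho_sum (φ : G →* Multiplicative ℤ) (t : G) (n : ℤ) {β : Type*}
    (s : Finset β) (f : β → MonoidAlgebra K G) :
    laurentRho φ t n (∑ b ∈ s, f b) = ∑ b ∈ s, laurentRho φ t n (f b) := by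
  apply MonoidAlgebra.ext; apply Finsupp.ext; intro u
  show (∑ b ∈ s, f b).coeff (t ^ n * (u : G)) = (∑ b ∈ s, laurentRho φ t n (f b)).coeff u
  rw [MonoidAlgebra.coeff_sum, MonoidAlgebra.coeff_sum, Finset.sum_apply', Finset.sum_apply']
  rfl

/-- conjugation map on the kernel -/
def laurentConj (φ : G →* Multiplicative ℤ) (t : G) (n : ℤ) (u : ↥φ.ker) : ↥φ.ker :=
  ⟨t ^ n * (u : G) * (t ^ n)⁻¹, by
    have hu : φ (u : G) = 1 := u.2
    simp [MonoidHom.mem_ker, map_mul, hu]⟩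

theorem laurentConj_inj (φ : G →* Multiplicative ℤ) (t : G) (n : ℤ) :
    Function.Injective (laurentConj φ t n) := by
  intro u v h
  have h' := congrArg Subtype.val h
  simp only [laurentConj] at h'
  exact Subtype.ext (mul_left_cancel (mul_right_cancel h'))

end Laurent

section Laurent2

variable {K : Type} [Field K] {G : Type} [Group G]

theorem laurent_hmul_iota (φ : G →* Multiplicative ℤ) (a : MonoidAlgebra K ↥φ.ker)
    (r : MonoidAlgebra K G) (y : G) :
    (MonoidAlgebra.mapDomainRingHom K φ.ker.subtype a * r).coeff y =
      a.coeff.sum fun u c => c * r.coeff ((u : G)⁻¹ * y) := by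
  rw [mulApplyLeft]
  have e : (MonoidAlgebra.mapDomainRingHom K φ.ker.subtype a).coeff
      = Finsupp.mapDomain (fun u : ↥φ.ker => (u : G)) a.coeff := rfl
  rw [e, Finsupp.sum_mapDomain_index_inj (fun u v h => Subtype.ext h)]

theorem laurentRho_twist (φ : G →* Multiplicative ℤ) (t : G) (n : ℤ)
    (b : MonoidAlgebra K ↥φ.ker) (r : MonoidAlgebra K G) :
    laurentRho φ t n (MonoidAlgebra.mapDomainRingHom K φ.ker.subtype
      (MonoidAlgebra.mapDomain (laurentConj φ t n) b) * r) = b * laurentRho φ t n r := by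
  apply MonoidAlgebra.ext; apply Finsupp.ext; intro u
  rw [laurentRho_apply, laurent_hmul_iota, MonoidAlgebra.coeff_mapDomain,
    Finsupp.sum_mapDomain_index_inj (laurentConj_inj φ t n), mulApplyLeft]
  refine Finsupp.sum_congr fun w _ => ?_
  rw [laurentRho_apply]
  have e : ((laurentConj φ t n w : G))⁻¹ * (t ^ n * (u : G))
      = t ^ n * ((w⁻¹ * u : ↥φ.ker) : G) := by
    show ((t ^ n * (w : G) * (t ^ n)⁻¹ : G))⁻¹ * (t ^ n * (u : G))
      = t ^ n * ((w⁻¹ * u : ↥φ.ker) : G)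
    push_cast
    group
  rw [e]

theorem laurentRho_shift (φ : G →* Multiplicative ℤ) (t : G) (n k : ℤ)
    (r : MonoidAlgebra K G) :
    laurentRho φ t n (MonoidAlgebra.single (t ^ k) 1 * r) = laurentRho φ t (n - k) r := by
  apply MonoidAlgebra.ext; apply Finsupp.ext; intro u
  rw [laurentRho_apply, laurentRho_apply, MonoidAlgebra.single_mul_apply, one_mul]
  congr 1
  group

theorem laurentBd_zero (φ : G →* Multiplicative ℤ) (lo hi : ℤ) :
    laurentBd φ lo hi (0 : MonoidAlgebra K G) := fun g hg => absurd rfl hg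

theorem laurentBd_mono (φ : G →* Multiplicative ℤ) {lo hi lo' hi' : ℤ}
    {r : MonoidAlgebra K G} (h1 : lo' ≤ lo) (h2 : hi ≤ hi') (h : laurentBd φ lo hi r) :
    laurentBd φ lo' hi' r := fun g hg => ⟨le_trans h1 (h g hg).1, le_trans (h g hg).2 h2⟩

theorem laurentBd_add (φ : G →* Multiplicative ℤ) {lo hi : ℤ} {r s : MonoidAlgebra K G}
    (hr : laurentBd φ lo hi r) (hs : laurentBd φ lo hi s) : laurentBd φ lo hi (r + s) := by
  intro g hg
  by_cases h1 : r.coeff g = 0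
  · refine hs g ?_
    have : (r + s).coeff g = r.coeff g + s.coeff g := rfl
    rw [this, h1, zero_add] at hg
    exact hg
  · exact hr g h1

theorem laurentBd_neg (φ : G →* Multiplicative ℤ) {lo hi : ℤ} {r : MonoidAlgebra K G}
    (hr : laurentBd φ lo hi r) : laurentBd φ lo hi (-r) := by
  intro g hg
  refine hr g ?_
  have : (-r).coeff g = -(r.coeff g) := rfl
  rw [this, neg_ne_zero] at hg
  exact hg

theorem laurentBd_sum (φ : G →* Multiplicative ℤ) {lo hi : ℤ} {β : Type*}
    (s : Finset β) (f : β → MonoidAlgebra K G) (h : ∀ b ∈ s, laurentBd φ lo hi (f b)) :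
    laurentBd φ lo hi (∑ b ∈ s, f b) :=
  Finset.sum_induction f (laurentBd φ lo hi) (fun _ _ => laurentBd_add φ)
    (laurentBd_zero φ lo hi) h

theorem laurentBd_shift (φ : G →* Multiplicative ℤ) {t : G}
    (ht : φ t = Multiplicative.ofAdd 1) (k : ℤ) {lo hi : ℤ} {r : MonoidAlgebra K G}
    (h : laurentBd φ lo hi r) :
    laurentBd φ (lo + k) (hi + k) (MonoidAlgebra.single (t ^ k) 1 * r) := by
  intro g hg
  rw [MonoidAlgebra.single_mul_apply, one_mul] at hg
  obtain ⟨h1, h2⟩ := h _ hg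
  have e : laurentDeg φ ((t ^ k)⁻¹ * g) = -k + laurentDeg φ g := by
    rw [laurentDeg_mul, laurentDeg_inv, laurentDeg_zpow φ ht]
  rw [e] at h1 h2
  omega

theorem laurentBd_iota (φ : G →* Multiplicative ℤ) (a : MonoidAlgebra K ↥φ.ker)
    {lo hi : ℤ} {r : MonoidAlgebra K G} (h : laurentBd φ lo hi r) :
    laurentBd φ lo hi (MonoidAlgebra.mapDomainRingHom K φ.ker.subtype a * r) := by
  intro g hg
  by_contra hcon
  apply hg
  rw [laurent_hmul_iota, Finsupp.sum]
  apply Finset.sum_eq_zero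
  intro u _
  have hdu : laurentDeg φ ((u : G)⁻¹ * g) = laurentDeg φ g := by
    rw [laurentDeg_mul, laurentDeg_inv, (laurentDeg_ker φ (u : G)).mp u.2]
    ring
  have hr0 : r.coeff ((u : G)⁻¹ * g) = 0 := by
    by_contra hr
    exact hcon (hdu ▸ h _ hr)
  rw [hr0, mul_zero]

theorem laurentBd_top (φ : G →* Multiplicative ℤ) {t : G}
    (ht : φ t = Multiplicative.ofAdd 1) (n : ℤ) (r : MonoidAlgebra K G)
    (h : laurentBd φ 0 n r) (hρ : laurentRho φ t n r = 0) :
    laurentBd φ 0 (n - 1) r := by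
  intro g hg
  obtain ⟨h1, h2⟩ := h g hg
  refine ⟨h1, ?_⟩
  by_contra hcon
  push_neg at hcon
  have hdg : laurentDeg φ g = n := by omega
  have hmem : (t ^ n)⁻¹ * g ∈ φ.ker := (laurentDeg_ker φ _).mpr (by
    rw [laurentDeg_mul, laurentDeg_inv, laurentDeg_zpow φ ht, hdg]; ring)
  have : r.coeff g = (laurentRho φ t n r).coeff ⟨(t ^ n)⁻¹ * g, hmem⟩ := by
    rw [laurentRho_apply]
    congr 1
    group
  rw [hρ] at this
  exact hg this

theorem laurentBd_bot (φ : G →* Multiplicative ℤ) {t : G}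
    (ht : φ t = Multiplicative.ofAdd 1) (r : MonoidAlgebra K G)
    (h : laurentBd φ 0 0 r) (hρ : laurentRho φ t 0 r = 0) : r = 0 := by
  apply MonoidAlgebra.ext; apply Finsupp.ext; intro g
  show r.coeff g = 0
  by_contra hg
  obtain ⟨h1, h2⟩ := h g hg
  have hdg : laurentDeg φ g = 0 := le_antisymm h2 h1
  have hmem : (t ^ (0:ℤ))⁻¹ * g ∈ φ.ker := (laurentDeg_ker φ _).mpr (by
    rw [laurentDeg_mul, laurentDeg_inv, laurentDeg_zpow φ ht, hdg]; ring)
  have : r.coeff g = (laurentRho φ t 0 r).coeff ⟨(t ^ (0:ℤ))⁻¹ * g, hmem⟩ := by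
    rw [laurentRho_apply]
    congr 1
    group
  rw [hρ] at this
  exact hg this

end Laurent2

section LaurentMain

variable {K : Type} [Field K]

theorem noeth_of_surj_toZ {G : Type} [Group G] (φ : G →* Multiplicative ℤ)
    (hφ : Function.Surjective φ)
    (hN : IsNoetherianRing (MonoidAlgebra K ↥φ.ker)) :
    IsNoetherianRing (MonoidAlgebra K G) := by
  classical
  obtain ⟨t, ht⟩ := hφ (Multiplicative.ofAdd 1)
  haveI : IsNoetherian (MonoidAlgebra K ↥φ.ker) (MonoidAlgebra K ↥φ.ker) :=
    isNoetherianRing_iff.mp hN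
  rw [isNoetherianRing_iff_ideal_fg]
  intro I
  -- the leading coefficient submodules
  let J : ℕ → Submodule (MonoidAlgebra K ↥φ.ker) (MonoidAlgebra K ↥φ.ker) := fun n =>
    { carrier := {a | ∃ r, r ∈ I ∧ laurentBd φ 0 (n : ℤ) r ∧ laurentRho φ t (n : ℤ) r = a}
      add_mem' := by
        rintro a b ⟨r, hrI, hrB, hrρ⟩ ⟨s, hsI, hsB, hsρ⟩
        exact ⟨r + s, I.add_mem hrI hsI, laurentBd_add φ hrB hsB, by
          rw [laurentRho_add, hrρ, hsρ]⟩
      zero_mem' := ⟨0, I.zero_mem, laurentBd_zero φ _ _, laurentRho_zero φ t _⟩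
      smul_mem' := by
        rintro b a ⟨r, hrI, hrB, hrρ⟩
        refine ⟨MonoidAlgebra.mapDomainRingHom K φ.ker.subtype
          (MonoidAlgebra.mapDomain (laurentConj φ t (n : ℤ)) b) * r, ?_, laurentBd_iota φ _ hrB, ?_⟩
        · have := I.smul_mem (MonoidAlgebra.mapDomainRingHom K φ.ker.subtype
            (MonoidAlgebra.mapDomain (laurentConj φ t (n : ℤ)) b)) hrI
          rwa [smul_eq_mul] at this
        · rw [laurentRho_twist, hrρ, smul_eq_mul] }
  have hJmem : ∀ (n : ℕ) (a : MonoidAlgebra K ↥φ.ker), a ∈ J n ↔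
      ∃ r, r ∈ I ∧ laurentBd φ 0 (n : ℤ) r ∧ laurentRho φ t (n : ℤ) r = a := fun n a => Iff.rfl
  have Jmono : Monotone J := by
    apply monotone_nat_of_le_succ
    intro n a ha
    obtain ⟨r, hrI, hrB, hrρ⟩ := (hJmem n a).mp ha
    refine (hJmem (n+1) a).mpr ⟨MonoidAlgebra.single (t ^ (1:ℤ)) 1 * r, ?_, ?_, ?_⟩
    · have := I.smul_mem (MonoidAlgebra.single (t ^ (1:ℤ)) 1) hrI
      rwa [smul_eq_mul] at this
    · exact laurentBd_mono φ (by omega) (by push_cast; omega) (laurentBd_shift φ ht 1 hrB)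
    · rw [laurentRho_shift]
      have e : ((n + 1 : ℕ) : ℤ) - 1 = (n : ℤ) := by push_cast; ring
      rw [e, hrρ]
  obtain ⟨n₀, hstab⟩ := (monotone_stabilizes_iff_noetherian.mpr
    (isNoetherianRing_iff.mp hN)) ⟨J, Jmono⟩
  -- witnesses
  have hwit : ∀ (n : ℕ) (a : MonoidAlgebra K ↥φ.ker), a ∈ J n →
      ∃ r, r ∈ I ∧ laurentBd φ 0 (n : ℤ) r ∧ laurentRho φ t (n : ℤ) r = a :=
    fun n a ha => (hJmem n a).mp ha
  choose wit hwitI hwitB hwitρ using hwit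
  choose sgen hsgen using fun n : ℕ => IsNoetherian.noetherian (J n)
  have hmemJ : ∀ (n : ℕ) (a : MonoidAlgebra K ↥φ.ker), a ∈ sgen n → a ∈ J n := fun n a ha => by
    rw [← hsgen n]; exact Submodule.subset_span ha
  let F : Finset (MonoidAlgebra K G) := (Finset.range (n₀ + 1)).biUnion fun n =>
    Finset.image (fun a : {x // x ∈ sgen n} => wit n a.1 (hmemJ n a.1 a.2)) (sgen n).attach
  have hFI : ∀ r ∈ F, r ∈ I := by
    intro r hr
    obtain ⟨n, -, hn⟩ := Finset.mem_biUnion.mp hr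
    obtain ⟨a, -, rfl⟩ := Finset.mem_image.mp hn
    exact hwitI n _ _
  -- main induction
  have main : ∀ m : ℕ, ∀ r, r ∈ I → laurentBd φ 0 (m : ℤ) r →
      r ∈ Submodule.span (MonoidAlgebra K G) (F : Set (MonoidAlgebra K G)) := by
    intro m
    induction m using Nat.strong_induction_on with
    | _ m IH =>
    intro r hrI hrB
    by_cases hm : m ≤ n₀
    · have ha : laurentRho φ t (m : ℤ) r ∈ J m := (hJmem m _).mpr ⟨r, hrI, hrB, rfl⟩
      rw [← hsgen m] at ha
      obtain ⟨f, -, hf⟩ := Submodule.mem_span_finset.mp ha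
      set c : MonoidAlgebra K G := ∑ b ∈ (sgen m).attach,
        MonoidAlgebra.mapDomainRingHom K φ.ker.subtype
          (MonoidAlgebra.mapDomain (laurentConj φ t (m : ℤ)) (f (b : MonoidAlgebra K ↥φ.ker))) *
          wit m (b : MonoidAlgebra K ↥φ.ker) (hmemJ m _ b.2) with hc
      have hcI : c ∈ I := Submodule.sum_mem I fun b _ => by
        have := I.smul_mem (MonoidAlgebra.mapDomainRingHom K φ.ker.subtype
          (MonoidAlgebra.mapDomain (laurentConj φ t (m : ℤ)) (f (b : MonoidAlgebra K ↥φ.ker))))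
          (hwitI m (b : MonoidAlgebra K ↥φ.ker) (hmemJ m _ b.2))
        rwa [smul_eq_mul] at this
      have hcB : laurentBd φ 0 (m : ℤ) c :=
        laurentBd_sum φ _ _ fun b _ => laurentBd_iota φ _ (hwitB m _ _)
      have hcspan : c ∈ Submodule.span (MonoidAlgebra K G) (F : Set (MonoidAlgebra K G)) :=
        Submodule.sum_mem _ fun b _ => by
          have hFmem : wit m (b : MonoidAlgebra K ↥φ.ker) (hmemJ m _ b.2) ∈ F :=
            Finset.mem_biUnion.mpr ⟨m, Finset.mem_range.mpr (by omega),
              Finset.mem_image.mpr ⟨b, Finset.mem_attach _ _, rfl⟩⟩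
          have := Submodule.smul_mem
            (Submodule.span (MonoidAlgebra K G) (F : Set (MonoidAlgebra K G)))
            (MonoidAlgebra.mapDomainRingHom K φ.ker.subtype
              (MonoidAlgebra.mapDomain (laurentConj φ t (m : ℤ)) (f (b : MonoidAlgebra K ↥φ.ker))))
            (Submodule.subset_span hFmem)
          rwa [smul_eq_mul] at this
      have hρc : laurentRho φ t (m : ℤ) c = laurentRho φ t (m : ℤ) r := by
        rw [hc, laurentRho_sum]
        have e1 : ∀ b ∈ (sgen m).attach,
            laurentRho φ t (m : ℤ) (MonoidAlgebra.mapDomainRingHom K φ.ker.subtype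
              (MonoidAlgebra.mapDomain (laurentConj φ t (m : ℤ)) (f (b : MonoidAlgebra K ↥φ.ker))) *
              wit m (b : MonoidAlgebra K ↥φ.ker) (hmemJ m _ b.2)) =
            f (b : MonoidAlgebra K ↥φ.ker) * (b : MonoidAlgebra K ↥φ.ker) := by
          intro b _
          rw [laurentRho_twist, hwitρ]
        rw [Finset.sum_congr rfl e1, Finset.sum_attach (sgen m)
          (fun b => f b * b)]
        rw [← hf]
        refine Finset.sum_congr rfl fun b _ => ?_
        rw [smul_eq_mul]
      have hρr' : laurentRho φ t (m : ℤ) (r - c) = 0 := by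
        rw [laurentRho_sub, hρc, sub_self]
      have hr'I : r - c ∈ I := I.sub_mem hrI hcI
      have hr'B : laurentBd φ 0 (m : ℤ) (r - c) := by
        rw [sub_eq_add_neg]
        exact laurentBd_add φ hrB (laurentBd_neg φ hcB)
      have hrsplit : r = (r - c) + c := by abel
      rcases Nat.eq_zero_or_pos m with hm0 | hmpos
      · subst hm0
        have h0 : r - c = 0 := laurentBd_bot φ ht _ (by exact_mod_cast hr'B)
          (by exact_mod_cast hρr')
        rw [hrsplit, h0, zero_add]
        exact hcspan
      · have hB' : laurentBd φ 0 ((m - 1 : ℕ) : ℤ) (r - c) := by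
          have h1 := laurentBd_top φ ht (m : ℤ) _ hr'B hρr'
          have e : ((m : ℤ) - 1) = ((m - 1 : ℕ) : ℤ) := by omega
          rwa [e] at h1
        have h2 := IH (m - 1) (by omega) (r - c) hr'I hB'
        rw [hrsplit]
        exact Submodule.add_mem _ h2 hcspan
    · push_neg at hm
      have ha : laurentRho φ t (m : ℤ) r ∈ J (m - 1) := by
        have h1 : J m = J n₀ := (hstab m (by omega)).symm
        have h2 : J (m - 1) = J n₀ := (hstab (m - 1) (by omega)).symm
        rw [h2, ← h1]
        exact (hJmem m _).mpr ⟨r, hrI, hrB, rfl⟩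
      obtain ⟨s, hsI, hsB, hsρ⟩ := (hJmem (m-1) _).mp ha
      have hρr' : laurentRho φ t (m : ℤ)
          (r - MonoidAlgebra.single (t ^ (1:ℤ)) 1 * s) = 0 := by
        rw [laurentRho_sub, laurentRho_shift,
          show ((m : ℤ) - 1) = ((m - 1 : ℕ) : ℤ) by omega, hsρ, sub_self]
      have hr'I : r - MonoidAlgebra.single (t ^ (1:ℤ)) 1 * s ∈ I := by
        refine I.sub_mem hrI ?_
        have := I.smul_mem (MonoidAlgebra.single (t ^ (1:ℤ)) 1) hsI
        rwa [smul_eq_mul] at this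
      have hr'B : laurentBd φ 0 (m : ℤ) (r - MonoidAlgebra.single (t ^ (1:ℤ)) 1 * s) := by
        rw [sub_eq_add_neg]
        refine laurentBd_add φ hrB (laurentBd_neg φ ?_)
        exact laurentBd_mono φ (by omega) (by omega) (laurentBd_shift φ ht 1 hsB)
      have hB' : laurentBd φ 0 ((m - 1 : ℕ) : ℤ)
          (r - MonoidAlgebra.single (t ^ (1:ℤ)) 1 * s) := by
        have h1 := laurentBd_top φ ht (m : ℤ) _ hr'B hρr'
        rwa [show ((m : ℤ) - 1) = ((m - 1 : ℕ) : ℤ) by omega] at h1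
      have h1 := IH (m - 1) (by omega) _ hr'I hB'
      have h2 := IH (m - 1) (by omega) s hsI hsB
      have hrsplit : r = (r - MonoidAlgebra.single (t ^ (1:ℤ)) 1 * s) +
          MonoidAlgebra.single (t ^ (1:ℤ)) 1 * s := by abel
      rw [hrsplit]
      refine Submodule.add_mem _ h1 ?_
      have := Submodule.smul_mem
        (Submodule.span (MonoidAlgebra K G) (F : Set (MonoidAlgebra K G)))
        (MonoidAlgebra.single (t ^ (1:ℤ)) 1) h2
      rwa [smul_eq_mul] at this
  -- conclusion
  refine ⟨F, le_antisymm ?_ ?_⟩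
  · rw [← Ideal.submodule_span_eq, Submodule.span_le]
    intro y hy
    exact hFI y hy
  · intro r hrI
    rw [← Ideal.submodule_span_eq]
    by_cases hr0 : r = 0
    · subst hr0; exact Submodule.zero_mem _
    · have hBne : (r.coeff.support.image (laurentDeg φ)).Nonempty :=
        (Finsupp.support_nonempty_iff.mpr (MonoidAlgebra.coeff_eq_zero.not.mpr hr0)).image _
      set B := r.coeff.support.image (laurentDeg φ) with hB
      set k := B.min' hBne with hk
      have hshift : laurentBd φ 0 (((B.max' hBne - k).toNat : ℕ) : ℤ)
          (MonoidAlgebra.single (t ^ (-k)) 1 * r) := by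
        intro g hg
        rw [MonoidAlgebra.single_mul_apply, one_mul] at hg
        have hmem : laurentDeg φ ((t ^ (-k))⁻¹ * g) ∈ B :=
          Finset.mem_image_of_mem (laurentDeg φ) (Finsupp.mem_support_iff.mpr hg)
        have h1 := B.min'_le _ hmem
        have h2 := B.le_max' _ hmem
        have e : laurentDeg φ ((t ^ (-k))⁻¹ * g) = k + laurentDeg φ g := by
          rw [laurentDeg_mul, laurentDeg_inv, laurentDeg_zpow φ ht]
          ring
        have h1' : k ≤ k + laurentDeg φ g := by rw [← e]; exact h1
        have h2' : k + laurentDeg φ g ≤ B.max' hBne := by rw [← e]; exact h2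
        constructor
        · omega
        · omega
      have hIs : MonoidAlgebra.single (t ^ (-k)) 1 * r ∈ I := by
        have := I.smul_mem (MonoidAlgebra.single (t ^ (-k)) 1) hrI
        rwa [smul_eq_mul] at this
      have hsp := main _ _ hIs hshift
      have hre : r = MonoidAlgebra.single (t ^ k) 1 *
          (MonoidAlgebra.single (t ^ (-k)) 1 * r) := by
        rw [← mul_assoc, MonoidAlgebra.single_mul_single, one_mul]
        have e : t ^ k * t ^ (-k) = 1 := by group
        rw [e, ← MonoidAlgebra.one_def, one_mul]
      rw [hre]
      have := Submodule.smul_mem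
        (Submodule.span (MonoidAlgebra K G) (F : Set (MonoidAlgebra K G)))
        (MonoidAlgebra.single (t ^ k) 1) hsp
      rwa [smul_eq_mul] at this

end LaurentMain

section Assembly

variable {K : Type} [Field K]

theorem exists_toZ {G : Type} [Group G] (N : Subgroup G) [hn : N.Normal]
    (hc : IsCyclic (G ⧸ N)) (hinf : Infinite (G ⧸ N)) :
    ∃ φ : G →* Multiplicative ℤ, Function.Surjective φ ∧ φ.ker = N := by
  obtain ⟨q, hq⟩ := hc.exists_generator
  let e : Multiplicative ℤ →* G ⧸ N := zpowersHom (G ⧸ N) q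
  have hesurj : Function.Surjective e := by
    intro x
    obtain ⟨k, hk⟩ := Subgroup.mem_zpowers_iff.mp (hq x)
    exact ⟨Multiplicative.ofAdd k, hk⟩
  have heinj : Function.Injective e := by
    intro x y hxy
    by_contra hne
    have h1 : q ^ (Multiplicative.toAdd x - Multiplicative.toAdd y) = 1 := by
      have : q ^ Multiplicative.toAdd x = q ^ Multiplicative.toAdd y := hxy
      rw [zpow_sub, this, mul_inv_cancel]
    have h2 : Multiplicative.toAdd x - Multiplicative.toAdd y ≠ 0 := by
      intro h
      apply hne
      have : Multiplicative.toAdd x = Multiplicative.toAdd y := by omega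
      exact Multiplicative.toAdd.injective this
    have hfin : IsOfFinOrder q := isOfFinOrder_iff_zpow_eq_one.mpr ⟨_, h2, h1⟩
    have : (Set.univ : Set (G ⧸ N)).Finite :=
      Set.Finite.subset hfin.finite_zpowers (fun x _ => hq x)
    exact Set.infinite_univ this
  let E : Multiplicative ℤ ≃* G ⧸ N := MulEquiv.ofBijective e ⟨heinj, hesurj⟩
  refine ⟨E.symm.toMonoidHom.comp (QuotientGroup.mk' N), ?_, ?_⟩
  · exact E.symm.surjective.comp (QuotientGroup.mk'_surjective N)
  · ext g
    rw [MonoidHom.mem_ker]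
    show E.symm ((QuotientGroup.mk' N) g) = 1 ↔ g ∈ N
    rw [MulEquiv.map_eq_one_iff]
    exact QuotientGroup.eq_one_iff g

theorem noeth_step {G : Type} [Group G] (N : Subgroup G) (hn : N.Normal)
    (hc : letI := hn; IsCyclic (G ⧸ N))
    (h : IsNoetherianRing (MonoidAlgebra K ↥N)) : IsNoetherianRing (MonoidAlgebra K G) := by
  letI := hn
  by_cases hfin : Finite (G ⧸ N)
  · exact noeth_of_finiteIndex N ⟨Subgroup.index_ne_zero_of_finite⟩ h
  · haveI : Infinite (G ⧸ N) := not_finite_iff_infinite.mp hfin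
    obtain ⟨φ, hsurj, hker⟩ := exists_toZ N hc inferInstance
    apply noeth_of_surj_toZ φ hsurj
    rw [hker]
    exact h

end Assembly

section Assembly2

variable {K : Type} [Field K]

theorem noeth_of_polycyclic {P : Type} [Group P] (h : IsPolycyclic P) :
    IsNoetherianRing (MonoidAlgebra K P) := by
  obtain ⟨n, s, h0, htop, hstep⟩ := h
  have key : ∀ (j : ℕ) (hj : j < n + 1), IsNoetherianRing (MonoidAlgebra K ↥(s ⟨j, hj⟩)) := by
    intro j
    induction j with
    | zero =>
      intro hj
      have e : s ⟨0, hj⟩ = ⊥ := h0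
      rw [e]
      exact noeth_finite_group _
    | succ j IHj =>
      intro hj
      have hj' : j < n + 1 := by omega
      have IH := IHj hj'
      set i : Fin n := ⟨j, by omega⟩ with hi
      obtain ⟨hle, hn', hcyc⟩ := hstep i
      have hNiso : ↥((s i.castSucc).subgroupOf (s i.succ)) ≃* ↥(s i.castSucc) :=
        Subgroup.subgroupOfEquivOfLe hle
      have hIH' : IsNoetherianRing (MonoidAlgebra K ↥(s i.castSucc)) := by
        have ecast : i.castSucc = (⟨j, hj'⟩ : Fin (n+1)) := rfl
        rw [ecast]
        exact IH
      have hNnoeth : IsNoetherianRing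
          (MonoidAlgebra K ↥((s i.castSucc).subgroupOf (s i.succ))) :=
        noeth_congr hNiso.symm hIH'
      have hres := noeth_step ((s i.castSucc).subgroupOf (s i.succ)) hn' hcyc hNnoeth
      have esucc : i.succ = (⟨j + 1, hj⟩ : Fin (n+1)) := rfl
      rw [← esucc]
      exact hres
  have htop' := key n (by omega)
  have e : s ⟨n, by omega⟩ = ⊤ := htop
  rw [e] at htop'
  exact noeth_congr Subgroup.topEquiv htop'

theorem noeth_of_pbf {G : Type} [Group G]
    (h : ∃ H : Subgroup G, IsPolycyclic ↥H ∧ H.FiniteIndex) :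
    IsNoetherianRing (MonoidAlgebra K G) := by
  obtain ⟨H, hpoly, hfi⟩ := h
  exact noeth_of_finiteIndex H hfi (noeth_of_polycyclic hpoly)

end Assembly2

section Pairing

variable {K : Type} [Field K] {G : Type} [Group G]

noncomputable def pairW (w : G → K) : MonoidAlgebra K G →+ K :=
  (Finsupp.liftAddHom fun g => AddMonoidHom.mulRight (w g)).comp
    MonoidAlgebra.coeffAddEquiv.toAddMonoidHom

theorem pairW_single (w : G → K) (g : G) (c : K) :
    pairW w (MonoidAlgebra.single g c) = c * w g :=
  Finsupp.liftAddHom_apply_single _ _ _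

theorem pairW_single_mul (w : G → K) (g₀ : G) (c₀ : K) (p : MonoidAlgebra K G) :
    pairW w (MonoidAlgebra.single g₀ c₀ * p) = c₀ * pairW (fun h => w (g₀ * h)) p := by
  induction p using MonoidAlgebra.induction_linear with
  | zero => rw [mul_zero, map_zero, map_zero, mul_zero]
  | add f g hf hg => rw [mul_add, map_add, map_add, hf, hg, mul_add]
  | single a c => rw [MonoidAlgebra.single_mul_single, pairW_single, pairW_single, mul_assoc]

theorem pairW_eq_sum_of_subset (w : G → K) (p : MonoidAlgebra K G) {D : Finset G}
    (h : p.coeff.support ⊆ D) : pairW w p = ∑ g ∈ D, p.coeff g * w g := by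
  have e : pairW w p = p.coeff.sum fun g c => c * w g := Finsupp.liftAddHom_apply _ _
  rw [e]
  exact Finsupp.sum_of_support_subset p.coeff h _ (fun g _ => zero_mul _)

end Pairing

theorem stmt12 {G : Type} (K : Type) [Group G] [Field K]
    (hpoly : IsPolycyclicByFinite G) :
    ∀ (A : Type) (_ : AddCommGroup A) (_ : Module K A), FiniteDimensional K A →
      ∀ S : Set (G → A), IsLinearSubshift K S → IsSFT S := by
  classical
  intro A iA iM hFD S hS
  haveI : FiniteDimensional K A := hFD
  have hRN : IsNoetherianRing (MonoidAlgebra K G) := noeth_of_pbf hpoly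
  haveI := hRN
  set nd := Module.finrank K A with hnd
  let b : Module.Basis (Fin nd) K A := Module.finBasis K A
  let B : (Fin nd → MonoidAlgebra K G) → (G → A) → K := fun f x =>
    ∑ i, pairW (fun g => b.repr (x g) i) (f i)
  have hBdef : ∀ f x, B f x = ∑ i, pairW (fun g => b.repr (x g) i) (f i) := fun _ _ => rfl
  have hB0 : ∀ x, B 0 x = 0 := fun x => by
    rw [hBdef]
    refine Finset.sum_eq_zero fun i _ => ?_
    show pairW _ (0 : MonoidAlgebra K G) = 0
    exact map_zero _
  have hBadd : ∀ f f' x, B (f + f') x = B f x + B f' x := fun f f' x => by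
    rw [hBdef, hBdef, hBdef, ← Finset.sum_add_distrib]
    refine Finset.sum_congr rfl fun i _ => ?_
    show pairW _ (f i + f' i) = _
    exact map_add _ _ _
  have hBsmul : ∀ (g₀ : G) (c₀ : K) f (x : G → A),
      B (MonoidAlgebra.single g₀ c₀ • f) x = c₀ * B f (fun h => x (g₀ * h)) := by
    intro g₀ c₀ f x
    rw [hBdef, hBdef, Finset.mul_sum]
    refine Finset.sum_congr rfl fun i _ => ?_
    show pairW _ (MonoidAlgebra.single g₀ c₀ * f i) = _
    exact pairW_single_mul _ _ _ _
  let T : Submodule (MonoidAlgebra K G) (Fin nd → MonoidAlgebra K G) :=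
    { carrier := {f | ∀ x ∈ S, ∀ g : G, B f (fun h => x (g * h)) = 0}
      add_mem' := fun {f f'} hf hf' x hx g => by
        rw [hBadd, hf x hx g, hf' x hx g, add_zero]
      zero_mem' := fun x hx g => hB0 _
      smul_mem' := fun c f hf => by
        induction c using MonoidAlgebra.induction_linear with
        | zero => intro x hx g; rw [zero_smul]; exact hB0 _
        | add c₁ c₂ h₁ h₂ =>
          intro x hx g
          rw [add_smul, hBadd, h₁ x hx g, h₂ x hx g, add_zero]
        | single g₀ c₀ =>
          intro x hx g
          rw [hBsmul]
          show c₀ * B f (fun h => x (g * (g₀ * h))) = 0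
          have e : (fun h => x (g * (g₀ * h))) = fun h => x ((g * g₀) * h) := by
            funext h; rw [mul_assoc]
          rw [e, hf x hx (g * g₀), mul_zero] }
  haveI : Module.Finite (MonoidAlgebra K G) (Fin nd → MonoidAlgebra K G) := Module.Finite.pi
  haveI : IsNoetherian (MonoidAlgebra K G) (Fin nd → MonoidAlgebra K G) := inferInstance
  obtain ⟨sF, hsF⟩ := IsNoetherian.noetherian T
  let D : Finset G := sF.biUnion fun f => Finset.univ.biUnion fun i : Fin nd => (f i).coeff.support
  have hsupp : ∀ f ∈ sF, ∀ i : Fin nd, (f i).coeff.support ⊆ D := fun f hf i g hg =>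
    Finset.mem_biUnion.mpr ⟨f, hf, Finset.mem_biUnion.mpr ⟨i, Finset.mem_univ i, hg⟩⟩
  have hwin : ∀ f, (∀ i : Fin nd, (f i).coeff.support ⊆ D) → ∀ y : G → A,
      B f y = ∑ i, ∑ d ∈ D.attach, (f i).coeff ↑d * b.repr (y ↑d) i := by
    intro f hsub y
    rw [hBdef]
    refine Finset.sum_congr rfl fun i _ => ?_
    rw [pairW_eq_sum_of_subset _ _ (hsub i)]
    rw [← Finset.sum_attach D (fun g => (f i).coeff g * b.repr (y g) i)]
  have hTmem : ∀ f ∈ sF, ∀ x ∈ S, ∀ g : G, B f (fun h => x (g * h)) = 0 := by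
    intro f hf
    have hfT : f ∈ T := by rw [← hsF]; exact Submodule.subset_span hf
    exact hfT
  refine ⟨D, {u : ↥(D : Set G) → A | ∀ f ∈ sF,
    ∑ i, ∑ d ∈ D.attach, (f i).coeff ↑d * b.repr (u ⟨↑d, Finset.mem_coe.mpr d.2⟩) i = 0}, ?_⟩
  ext x
  constructor
  · intro hx g
    intro f hf
    have h1 := hTmem f hf x hx g
    rw [hwin f (hsupp f hf)] at h1
    exact h1
  · intro hx
    by_contra hxS
    letI : TopologicalSpace A := ⊥
    haveI : DiscreteTopology A := ⟨rfl⟩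
    have hclosed : IsClosed S := hS.2.2
    have hopen : IsOpen Sᶜ := hclosed.isOpen_compl
    obtain ⟨Iw, u, hu, hsubset⟩ := isOpen_pi_iff.mp hopen x hxS
    have hdisj : ∀ y ∈ S, ∃ a ∈ Iw, y a ≠ x a := by
      intro y hy
      by_contra hcon
      push_neg at hcon
      have hmem : y ∈ (↑Iw : Set G).pi u := by
        intro a ha
        rw [hcon a ha]
        exact (hu a ha).2
      exact (hsubset hmem) hy
    obtain ⟨Msub, hMsub⟩ := hS.1
    let πL : (G → A) →ₗ[K] ({a // a ∈ Iw} → A) := LinearMap.funLeft K A Subtype.val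
    have hxW : πL x ∉ Msub.map πL := by
      rintro ⟨y, hyM, hyx⟩
      have hyS : y ∈ S := by rw [← hMsub]; exact hyM
      obtain ⟨a, ha, hne⟩ := hdisj y hyS
      exact hne (congrFun hyx ⟨a, ha⟩)
    obtain ⟨ψ, hψx, hψW⟩ := Submodule.exists_dual_map_eq_bot_of_notMem hxW inferInstance
    have hψ0 : ∀ v ∈ Msub.map πL, ψ v = 0 := by
      intro v hv
      have h1 : ψ v ∈ (Msub.map πL).map ψ := Submodule.mem_map_of_mem hv
      rw [hψW] at h1
      exact (Submodule.mem_bot K).mp h1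
    let f₀ : Fin nd → MonoidAlgebra K G := fun i =>
      ∑ a ∈ Iw.attach, MonoidAlgebra.single (↑a : G) (ψ (Pi.single a (b i)))
    have hBf₀ : ∀ y : G → A, B f₀ y = ψ (πL y) := by
      intro y
      rw [hBdef]
      have step1 : ∀ i : Fin nd, pairW (fun g => b.repr (y g) i) (f₀ i)
          = ∑ a ∈ Iw.attach, ψ (Pi.single a (b i)) * b.repr (y ↑a) i := by
        intro i
        show pairW (fun g => b.repr (y g) i)
            (∑ a ∈ Iw.attach, MonoidAlgebra.single (↑a : G) (ψ (Pi.single a (b i)))) = _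
        rw [map_sum]
        exact Finset.sum_congr rfl fun a _ => pairW_single _ _ _
      rw [Finset.sum_congr rfl fun i _ => step1 i, Finset.sum_comm]
      have step2 : ∀ a : {a // a ∈ Iw}, (∑ i, ψ (Pi.single a (b i)) * b.repr (y ↑a) i)
          = ψ (Pi.single a (y ↑a)) := by
        intro a
        have e1 : ∀ i : Fin nd, ψ (Pi.single a (b i)) * b.repr (y ↑a) i
            = ψ ((LinearMap.single K (fun _ : {a // a ∈ Iw} => A) a) (b.repr (y ↑a) i • b i)) := by
          intro i
          rw [map_smul, map_smul, smul_eq_mul, mul_comm]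
          rfl
        rw [Finset.sum_congr rfl fun i _ => e1 i, ← map_sum, ← map_sum, Module.Basis.sum_repr]
        rfl
      rw [Finset.sum_congr rfl fun a _ => step2 a, ← map_sum]
      congr 1
      have huniv : ∀ v : {a // a ∈ Iw} → A, ∑ a ∈ Iw.attach, Pi.single a (v a) = v := by
        intro v
        rw [← Finset.univ_eq_attach]
        exact Finset.univ_sum_single v
      exact huniv (πL y)
    have hf₀T : f₀ ∈ T := by
      intro y hy g
      have hy' : (fun h => y (g * h)) ∈ S := by
        have h2 := hS.2.1 g⁻¹ y hy
        simpa using h2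
      rw [hBf₀]
      refine hψ0 _ (Submodule.mem_map_of_mem ?_)
      rw [← hMsub] at hy'
      exact hy'
    have hf₀span : f₀ ∈ Submodule.span (MonoidAlgebra K G)
        (sF : Set (Fin nd → MonoidAlgebra K G)) := by
      rw [hsF]; exact hf₀T
    have hQ : ∀ g : G, B f₀ (fun h => x (g * h)) = 0 := by
      refine Submodule.span_induction ?_ ?_ ?_ ?_ hf₀span
      · intro f hf g
        rw [hwin f (hsupp f hf)]
        exact hx g f hf
      · intro g; exact hB0 _
      · intro p q hp hq hp' hq' g
        rw [hBadd, hp' g, hq' g, add_zero]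
      · intro c f hfs hf' g
        induction c using MonoidAlgebra.induction_linear with
        | zero => rw [zero_smul]; exact hB0 _
        | add c₁ c₂ h₁ h₂ => rw [add_smul, hBadd, h₁, h₂, add_zero]
        | single g₀ c₀ =>
          rw [hBsmul]
          show c₀ * B f (fun h => x (g * (g₀ * h))) = 0
          have e : (fun h => x (g * (g₀ * h))) = fun h => x ((g * g₀) * h) := by
            funext h; rw [mul_assoc]
          rw [e, hf' (g * g₀), mul_zero]
    have hBx : B f₀ x = 0 := by
      have h1 := hQ 1
      have e : (fun h => x (1 * h)) = x := by funext h; rw [one_mul]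
      rwa [e] at h1
    exact hψx ((hBf₀ x).symm.trans hBx)
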